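/- arXiv:2303.15943 — 2 statements merged into one kernel-verified Lean document; each statement's English description precedes it below -/
import Mathlib

section
/- Let X, Y be Hilbert spaces, A* : Y → X' a surjective linear isometry, Y^δ ⊆ Y a closed (e.g. finite-dimensional) subspace, and f ∈ Y'. Then the discrete normal equation — find w^δ ∈ Y^δ with (A*[w^δ], A*[v])_{X'} = f(v) for all v ∈ Y^δ — has a unique solution, and w^δ is the orthogonal projection of the continuous solution w onto Y^δ; consequently the reconstruction u^δ := R_X A*[w^δ] satisfies ‖u - u^δ‖_X = ‖w - w^δ‖_Y = min over v ∈ Y^δ of ‖w - v‖_Y, where u := R_X A*[w] is the exact solution. -/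
open scoped RealInnerProductSpace
open NormedSpace

/-- the discrete normal equation on a closed subspace `Y^δ ⊆ Y`
has a unique solution `w^δ`, which is the orthogonal projection of the
continuous solution `w` onto `Y^δ` (i.e. `w - w^δ ∈ (Y^δ)ᗮ`); the
reconstruction `u^δ := R_X A*[w^δ]` satisfies
`‖u - u^δ‖_X = ‖w - w^δ‖_Y = min_{v ∈ Y^δ} ‖w - v‖_Y`. -/
theorem stmt6
    {X : Type*} [NormedAddCommGroup X] [InnerProductSpace ℝ X] [CompleteSpace X]
    {Y : Type*} [NormedAddCommGroup Y] [InnerProductSpace ℝ Y] [CompleteSpace Y]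
    (Astar : Y →L[ℝ] StrongDual ℝ X)
    (hbij : Function.Bijective Astar) (hiso : ∀ v : Y, ‖Astar v‖ = ‖v‖)
    (f : StrongDual ℝ Y)
    (R : StrongDual ℝ X → X) (hR : R = (InnerProductSpace.toDual ℝ X).symm)
    (Yδ : Submodule ℝ Y) (hYδ : IsClosed (Yδ : Set Y))
    (w : Y) (hw : ∀ v : Y, ⟪R (Astar w), R (Astar v)⟫ = f v) :
    (∃! wδ : Y, wδ ∈ Yδ ∧ ∀ v ∈ Yδ, ⟪R (Astar wδ), R (Astar v)⟫ = f v) ∧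
      ∀ wδ : Y, (wδ ∈ Yδ ∧ ∀ v ∈ Yδ, ⟪R (Astar wδ), R (Astar v)⟫ = f v) →
        (w - wδ ∈ Yδᗮ ∧
         ‖R (Astar w) - R (Astar wδ)‖ = ‖w - wδ‖ ∧
         ∀ v ∈ Yδ, ‖w - wδ‖ ≤ ‖w - v‖) := by
  -- the composition y ↦ R (Astar y) is a linear isometry
  let L : Y →ₗᵢ[ℝ] X :=
    { toLinearMap := ((InnerProductSpace.toDual ℝ X).symm.toLinearIsometry.toLinearMap.comp
        (Astar : Y →ₗ[ℝ] StrongDual ℝ X))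
      norm_map' := by
        intro y
        simp [hiso y] }
  have hL : ∀ y : Y, R (Astar y) = L y := by
    intro y; simp [L, hR]
  have key : ∀ a b : Y, ⟪R (Astar a), R (Astar b)⟫ = ⟪a, b⟫ := by
    intro a b
    rw [hL, hL]
    exact L.inner_map_map a b
  have hw' : ∀ v : Y, ⟪w, v⟫ = f v := fun v => by rw [← key]; exact hw v
  haveI : CompleteSpace Yδ := hYδ.completeSpace_coe
  -- characterization: wδ solves discrete eq iff wδ ∈ Yδ and w - wδ ∈ Yδᗮ
  have char : ∀ wδ : Y,
      (wδ ∈ Yδ ∧ ∀ v ∈ Yδ, ⟪R (Astar wδ), R (Astar v)⟫ = f v) ↔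
      (wδ ∈ Yδ ∧ w - wδ ∈ Yδᗮ) := by
    intro wδ
    constructor
    · rintro ⟨hm, hs⟩
      refine ⟨hm, fun v hv => ?_⟩
      have h1 : ⟪wδ, v⟫ = f v := by rw [← key]; exact hs v hv
      have := hw' v
      rw [real_inner_comm, inner_sub_left, h1, this]; ring
    · rintro ⟨hm, ho⟩
      refine ⟨hm, fun v hv => ?_⟩
      rw [key, ← hw' v]
      have := ho v hv
      rw [real_inner_comm, inner_sub_left] at this
      linarith
  refine ⟨?_, ?_⟩
  · -- existence and uniqueness
    refine ⟨(Yδ.orthogonalProjectionOnto w : Y), ?_, ?_⟩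
    · exact (char _).mpr
        ⟨(Yδ.orthogonalProjectionOnto w).2, Yδ.sub_starProjection_mem_orthogonal w⟩
    · intro y hy
      rw [char] at hy
      symm
      exact Submodule.eq_starProjection_of_mem_of_inner_eq_zero hy.1
        (fun v hv => (Submodule.mem_orthogonal' Yδ _).mp hy.2 v hv)
  · intro wδ hwδ
    rw [char] at hwδ
    obtain ⟨hm, ho⟩ := hwδ
    refine ⟨ho, ?_, ?_⟩
    · rw [hL, hL, ← map_sub, L.norm_map]
    · intro v hv
      have horth : ⟪w - wδ, wδ - v⟫ = 0 := by
        rw [real_inner_comm]; exact ho _ (Yδ.sub_mem hm hv)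
      have hdecomp : w - v = (w - wδ) + (wδ - v) := by abel
      have hsq : ‖w - v‖ ^ 2 = ‖w - wδ‖ ^ 2 + ‖wδ - v‖ ^ 2 := by
        rw [hdecomp, @norm_add_sq_real, horth]; ring
      nlinarith [norm_nonneg (w - v), norm_nonneg (w - wδ), norm_nonneg (wδ - v)]
end

section
/- Let X, Y be Hilbert spaces, A* : Y → X' a surjective linear isometry, f ∈ Y', and Y^δ ⊆ Y a closed subspace. Denote by w the solution of the continuous normal equation and by w^δ the solution of the discrete normal equation on Y^δ. Then the discrete reconstruction u^δ := R_X A*[w^δ] is the X-orthogonal projection of the exact solution u := R_X A*[w] onto the subspace X^δ := R_X A*[Y^δ], i.e., u^δ is the best approximation of u in X^δ with respect to the X-norm. -/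
open scoped RealInnerProductSpace
open NormedSpace

/-- the discrete reconstruction `u^δ := R_X A*[w^δ]` is the
`X`-orthogonal projection of the exact solution `u := R_X A*[w]` onto
`X^δ := R_X A*[Y^δ]`, i.e. the best approximation of `u` in `X^δ`. -/
theorem stmt11
    {X : Type*} [NormedAddCommGroup X] [InnerProductSpace ℝ X] [CompleteSpace X]
    {Y : Type*} [NormedAddCommGroup Y] [InnerProductSpace ℝ Y] [CompleteSpace Y]
    (Astar : Y →L[ℝ] StrongDual ℝ X)
    (hbij : Function.Bijective Astar) (hiso : ∀ v : Y, ‖Astar v‖ = ‖v‖)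
    (f : StrongDual ℝ Y)
    (R : StrongDual ℝ X → X) (hR : R = (InnerProductSpace.toDual ℝ X).symm)
    (Yδ : Submodule ℝ Y) (hYδ : IsClosed (Yδ : Set Y))
    (w : Y) (hw : ∀ v : Y, ⟪R (Astar w), R (Astar v)⟫ = f v)
    (wδ : Y) (hwδmem : wδ ∈ Yδ)
    (hwδ : ∀ v ∈ Yδ, ⟪R (Astar wδ), R (Astar v)⟫ = f v) :
    (∃ y ∈ Yδ, R (Astar wδ) = R (Astar y)) ∧
    (∀ x : X, (∃ y ∈ Yδ, x = R (Astar y)) →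
      ⟪R (Astar w) - R (Astar wδ), x⟫ = 0) ∧
    (∀ x : X, (∃ y ∈ Yδ, x = R (Astar y)) →
      ‖R (Astar w) - R (Astar wδ)‖ ≤ ‖R (Astar w) - x‖) := by
  have horth : ∀ x : X, (∃ y ∈ Yδ, x = R (Astar y)) →
      ⟪R (Astar w) - R (Astar wδ), x⟫ = 0 := by
    rintro x ⟨y, hy, rfl⟩
    rw [inner_sub_left, hw y, hwδ y hy, sub_self]
  refine ⟨⟨wδ, hwδmem, rfl⟩, horth, ?_⟩
  rintro x ⟨y, hy, rfl⟩
  set u := R (Astar w)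
  set uδ := R (Astar wδ)
  have hsub : uδ - R (Astar y) = R (Astar (wδ - y)) := by
    simp [uδ, hR, map_sub]
  have h1 : ⟪u - uδ, uδ - R (Astar y)⟫ = 0 := by
    rw [hsub]; exact horth _ ⟨wδ - y, Yδ.sub_mem hwδmem hy, rfl⟩
  have hdecomp : u - R (Astar y) = (u - uδ) + (uδ - R (Astar y)) := by abel
  have := norm_add_sq_real (u - uδ) (uδ - R (Astar y))
  rw [h1] at this
  have hle : ‖u - uδ‖ ^ 2 ≤ ‖u - R (Astar y)‖ ^ 2 := by
    rw [hdecomp, this]; nlinarith [sq_nonneg ‖uδ - R (Astar y)‖]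
  nlinarith [hle, norm_nonneg (u - R (Astar y)), norm_nonneg (u - uδ)]
end
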